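/- Let p, q be integers with 2 ≤ p < q and let γ ∈ (0, γ_{p,q}), with a, A the two roots of g(u) = 1 − u^{p−1} + γ u^{q−1} in (0,∞), a < A. Let N ≥ 1 and let ũ ∈ ℝ^N have every entry in {a, −a, A, −A}, and let u⁽⁰⁾ ∈ ℓ²(ℤ, ℝ) be the sequence with u⁽⁰⁾_n = ũ_n for 1 ≤ n ≤ N and u⁽⁰⁾_n = 0 otherwise. Then there exist ε₀ > 0 and C₀ > 0 such that for every ε ∈ (0, ε₀) there exists a real-valued sequence u ∈ ℓ²(ℤ) satisfying ε(u_{n+1} − 2u_n + u_{n−1}) − u_n + |u_n|^{p−1}u_n − γ|u_n|^{q−1}u_n = 0 for all n ∈ ℤ and ‖u − u⁽⁰⁾‖_{ℓ²(ℤ)} ≤ C₀ ε. -/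

import Mathlib

open scoped ENNReal NNReal

namespace ILM

/-! ### ℓ² helpers -/

lemma memE_iff {f : ℤ → ℝ} : Memℓp f 2 ↔ Summable (fun n : ℤ => (f n) ^ 2) := by
  have key : (fun n : ℤ => ‖f n‖ ^ (2 : ℝ≥0∞).toReal) = fun n : ℤ => (f n) ^ 2 := by
    funext n
    rw [show ((2 : ℝ≥0∞)).toReal = ((2 : ℕ) : ℝ) by norm_num, Real.rpow_natCast,
      Real.norm_eq_abs, sq_abs]
  rw [memℓp_gen_iff (by norm_num), key]

noncomputable def mkE (f : ℤ → ℝ) (hf : Summable fun n : ℤ => (f n) ^ 2) :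
    lp (fun _ : ℤ => ℝ) 2 := ⟨f, memE_iff.2 hf⟩

@[simp] lemma mkE_apply (f : ℤ → ℝ) (hf : Summable fun n : ℤ => (f n) ^ 2) (n : ℤ) :
    (mkE f hf) n = f n := rfl

lemma norm_eq (f : lp (fun _ : ℤ => ℝ) 2) : ‖f‖ = Real.sqrt (∑' n : ℤ, (f n) ^ 2) := by
  have h1 : (∑' n : ℤ, ‖f n‖ ^ (2 : ℝ≥0∞).toReal) = ∑' n : ℤ, (f n) ^ 2 :=
    tsum_congr fun n => by
      rw [show ((2 : ℝ≥0∞)).toReal = ((2 : ℕ) : ℝ) by norm_num, Real.rpow_natCast,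
        Real.norm_eq_abs, sq_abs]
  rw [lp.norm_eq_tsum_rpow (by norm_num) f, h1, Real.sqrt_eq_rpow]
  norm_num

lemma abs_apply_le_norm (f : lp (fun _ : ℤ => ℝ) 2) (n : ℤ) : |f n| ≤ ‖f‖ := by
  have := lp.norm_apply_le_norm (by norm_num : (2 : ℝ≥0∞) ≠ 0) f n
  simpa [Real.norm_eq_abs] using this

lemma norm_le_of_abs_le {f g : lp (fun _ : ℤ => ℝ) 2} (h : ∀ n, |f n| ≤ |g n|) :
    ‖f‖ ≤ ‖g‖ := by
  rw [norm_eq, norm_eq]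
  apply Real.sqrt_le_sqrt
  refine Summable.tsum_le_tsum (fun n => ?_) (memE_iff.1 (lp.memℓp f)) (memE_iff.1 (lp.memℓp g))
  calc (f n) ^ 2 = |f n| ^ 2 := (sq_abs _).symm
    _ ≤ |g n| ^ 2 := pow_le_pow_left₀ (abs_nonneg _) (h n) 2
    _ = (g n) ^ 2 := sq_abs _

noncomputable def absE (f : lp (fun _ : ℤ => ℝ) 2) : lp (fun _ : ℤ => ℝ) 2 :=
  mkE (fun n => |f n|) (by simpa [sq_abs] using memE_iff.1 (lp.memℓp f))

@[simp] lemma absE_apply (f : lp (fun _ : ℤ => ℝ) 2) (n : ℤ) : absE f n = |f n| := rfl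

lemma norm_absE (f : lp (fun _ : ℤ => ℝ) 2) : ‖absE f‖ = ‖f‖ := by
  rw [norm_eq, norm_eq]
  congr 1
  exact tsum_congr fun n => by simp [sq_abs]

def shiftEquiv' (k : ℤ) : ℤ ≃ ℤ :=
  ⟨fun n => n + k, fun n => n - k, fun n => by dsimp only; omega, fun n => by dsimp only; omega⟩

noncomputable def shiftE (k : ℤ) (f : lp (fun _ : ℤ => ℝ) 2) : lp (fun _ : ℤ => ℝ) 2 :=
  mkE (fun n => f (n + k))
    ((Equiv.summable_iff (shiftEquiv' k) (f := fun n : ℤ => (f n) ^ 2)).2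
      (memE_iff.1 (lp.memℓp f)))

@[simp] lemma shiftE_apply (k : ℤ) (f : lp (fun _ : ℤ => ℝ) 2) (n : ℤ) :
    shiftE k f n = f (n + k) := rfl

lemma norm_shiftE (k : ℤ) (f : lp (fun _ : ℤ => ℝ) 2) : ‖shiftE k f‖ = ‖f‖ := by
  rw [norm_eq, norm_eq]
  congr 1
  exact Equiv.tsum_eq (shiftEquiv' k) (fun n => (f n) ^ 2)

/-! ### Scalar calculus lemmas -/

lemma hasDerivAt_abspow (e : ℕ) (he : 1 ≤ e) (x : ℝ) :
    HasDerivAt (fun y : ℝ => |y| ^ e * y) (((e : ℝ) + 1) * |x| ^ e) x := by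
  rcases lt_trichotomy x 0 with hx | hx | hx
  · have hev : (fun y : ℝ => |y| ^ e * y) =ᶠ[nhds x] fun y => (-1 : ℝ) ^ e * y ^ (e + 1) := by
      filter_upwards [Iio_mem_nhds hx] with y hy
      rw [abs_of_neg hy, neg_pow]
      ring
    have hd : HasDerivAt (fun y : ℝ => (-1 : ℝ) ^ e * y ^ (e + 1))
        ((-1 : ℝ) ^ e * (((e : ℝ) + 1) * x ^ e)) x := by
      have h := (hasDerivAt_pow (e + 1) x).const_mul ((-1 : ℝ) ^ e)
      refine h.congr_deriv ?_
      push_cast [Nat.add_sub_cancel]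
      try ring
    have hfin := hd.congr_of_eventuallyEq hev
    refine hfin.congr_deriv ?_
    rw [abs_of_neg hx, neg_pow]
    ring
  · subst hx
    have hval : ((e : ℝ) + 1) * |(0 : ℝ)| ^ e = 0 := by
      simp [zero_pow (by omega : e ≠ 0)]
    rw [hasDerivAt_iff_tendsto_slope, hval]
    have hev : slope (fun y : ℝ => |y| ^ e * y) 0 =ᶠ[nhdsWithin 0 {(0 : ℝ)}ᶜ]
        fun y => |y| ^ e := by
      filter_upwards [self_mem_nhdsWithin] with y hy
      have hy' : (y : ℝ) ≠ 0 := hy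
      simp only [slope, vsub_eq_sub, smul_eq_mul, sub_zero, abs_zero,
        zero_pow (by omega : e ≠ 0), zero_mul, mul_zero]
      field_simp
      try ring
    rw [Filter.tendsto_congr' hev]
    have hcont : Filter.Tendsto (fun y : ℝ => |y| ^ e) (nhds 0) (nhds 0) := by
      exact (continuous_abs.pow e).tendsto' 0 0 (by simp [zero_pow (by omega : e ≠ 0)])
    exact hcont.mono_left nhdsWithin_le_nhds
  · have hev : (fun y : ℝ => |y| ^ e * y) =ᶠ[nhds x] fun y => y ^ (e + 1) := by
      filter_upwards [Ioi_mem_nhds hx] with y hy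
      rw [abs_of_pos hy]
      ring
    have hd : HasDerivAt (fun y : ℝ => y ^ (e + 1)) (((e : ℝ) + 1) * x ^ e) x := by
      have h := hasDerivAt_pow (e + 1) x
      refine h.congr_deriv ?_
      push_cast [Nat.add_sub_cancel]
      try ring
    have hfin := hd.congr_of_eventuallyEq hev
    refine hfin.congr_deriv ?_
    rw [abs_of_pos hx]

noncomputable def phiF (m k : ℕ) (γ : ℝ) (x : ℝ) : ℝ :=
  -x + |x| ^ m * x - γ * (|x| ^ k * x)

noncomputable def phidF (m k : ℕ) (γ : ℝ) (x : ℝ) : ℝ :=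
  -1 + ((m : ℝ) + 1) * |x| ^ m - γ * (((k : ℝ) + 1) * |x| ^ k)

lemma phiF_hasDeriv (m k : ℕ) (hm : 1 ≤ m) (hk : 1 ≤ k) (γ : ℝ) (x : ℝ) :
    HasDerivAt (phiF m k γ) (phidF m k γ x) x := by
  have h0 : HasDerivAt (fun y : ℝ => -y) (-1 : ℝ) x := (hasDerivAt_id x).neg
  have h1 := hasDerivAt_abspow m hm x
  have h2 := (hasDerivAt_abspow k hk x).const_mul γ
  have := (h0.add h1).sub h2
  exact this

lemma abs_pow_sub_pow_le (n : ℕ) (B s t : ℝ) (hs : |s| ≤ B) (ht : |t| ≤ B) :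
    |s ^ n - t ^ n| ≤ (n : ℝ) * B ^ (n - 1) * |s - t| := by
  have hB : 0 ≤ B := (abs_nonneg s).trans hs
  have key : s ^ n - t ^ n = (∑ i ∈ Finset.range n, s ^ i * t ^ (n - 1 - i)) * (s - t) :=
    (geom_sum₂_mul s t n).symm
  rw [key, abs_mul]
  apply mul_le_mul_of_nonneg_right _ (abs_nonneg _)
  calc abs (∑ i ∈ Finset.range n, s ^ i * t ^ (n - 1 - i))
      ≤ ∑ i ∈ Finset.range n, |s ^ i * t ^ (n - 1 - i)| := Finset.abs_sum_le_sum_abs _ _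
    _ ≤ ∑ _i ∈ Finset.range n, B ^ (n - 1) := by
        apply Finset.sum_le_sum
        intro i hi
        rw [abs_mul, abs_pow, abs_pow]
        have h1 : |s| ^ i ≤ B ^ i := pow_le_pow_left₀ (abs_nonneg _) hs i
        have h2 : |t| ^ (n - 1 - i) ≤ B ^ (n - 1 - i) := pow_le_pow_left₀ (abs_nonneg _) ht _
        have h3 : B ^ i * B ^ (n - 1 - i) = B ^ (n - 1) := by
          rw [← pow_add]
          congr 1
          have := Finset.mem_range.1 hi
          omega
        calc |s| ^ i * |t| ^ (n - 1 - i) ≤ B ^ i * B ^ (n - 1 - i) :=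
              mul_le_mul h1 h2 (by positivity) (by positivity)
          _ = B ^ (n - 1) := h3
    _ = (n : ℝ) * B ^ (n - 1) := by
        rw [Finset.sum_const, Finset.card_range, nsmul_eq_mul]

lemma phidF_lip (m k : ℕ) (γ B : ℝ) (hγ : 0 ≤ γ) (x y : ℝ)
    (hx : |x| ≤ B) (hy : |y| ≤ B) :
    |phidF m k γ x - phidF m k γ y| ≤
      (((m : ℝ) + 1) * ((m : ℝ) * B ^ (m - 1)) +
        γ * (((k : ℝ) + 1) * ((k : ℝ) * B ^ (k - 1)))) * |x - y| := by
  have hB : 0 ≤ B := (abs_nonneg x).trans hx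
  have h1 : abs (|x| ^ m - |y| ^ m) ≤ (m : ℝ) * B ^ (m - 1) * |x - y| := by
    have h := abs_pow_sub_pow_le m B |x| |y| (by rwa [abs_abs]) (by rwa [abs_abs])
    refine h.trans ?_
    apply mul_le_mul_of_nonneg_left (abs_abs_sub_abs_le_abs_sub x y)
    have := pow_nonneg hB (m - 1)
    positivity
  have h2 : abs (|x| ^ k - |y| ^ k) ≤ (k : ℝ) * B ^ (k - 1) * |x - y| := by
    have h := abs_pow_sub_pow_le k B |x| |y| (by rwa [abs_abs]) (by rwa [abs_abs])
    refine h.trans ?_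
    apply mul_le_mul_of_nonneg_left (abs_abs_sub_abs_le_abs_sub x y)
    have := pow_nonneg hB (k - 1)
    positivity
  have hrw : phidF m k γ x - phidF m k γ y =
      ((m : ℝ) + 1) * (|x| ^ m - |y| ^ m) - γ * (((k : ℝ) + 1) * (|x| ^ k - |y| ^ k)) := by
    unfold phidF
    ring
  rw [hrw]
  have htri := abs_sub (((m : ℝ) + 1) * (|x| ^ m - |y| ^ m))
    (γ * (((k : ℝ) + 1) * (|x| ^ k - |y| ^ k)))
  refine htri.trans ?_
  rw [abs_mul, abs_mul, abs_mul, abs_of_nonneg (by positivity : (0:ℝ) ≤ (m : ℝ) + 1),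
    abs_of_nonneg hγ, abs_of_nonneg (by positivity : (0:ℝ) ≤ (k : ℝ) + 1)]
  have c1 : ((m : ℝ) + 1) * abs (|x| ^ m - |y| ^ m) ≤
      ((m : ℝ) + 1) * ((m : ℝ) * B ^ (m - 1) * |x - y|) :=
    mul_le_mul_of_nonneg_left h1 (by positivity)
  have c2 : γ * (((k : ℝ) + 1) * abs (|x| ^ k - |y| ^ k)) ≤
      γ * (((k : ℝ) + 1) * ((k : ℝ) * B ^ (k - 1) * |x - y|)) :=
    mul_le_mul_of_nonneg_left (mul_le_mul_of_nonneg_left h2 (by positivity)) hγ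
  nlinarith [c1, c2]

lemma mvt_bound (f f' : ℝ → ℝ) (hf : ∀ x, HasDerivAt f (f' x) x)
    (B₁ M : ℝ) (hM0 : 0 ≤ M)
    (hM : ∀ x y, |x| ≤ B₁ + 1 → |y| ≤ B₁ + 1 → |f' x - f' y| ≤ M * |x - y|)
    (x t₁ t₂ : ℝ) (hx : |x| ≤ B₁) (h1 : |t₁| ≤ 1) (h2 : |t₂| ≤ 1) :
    |f (x + t₁) - f (x + t₂) - f' x * (t₁ - t₂)| ≤ M * ((|t₁| + |t₂|) * |t₁ - t₂|) := by
  have core : ∀ s₁ s₂ : ℝ, |s₁| ≤ 1 → |s₂| ≤ 1 → s₂ < s₁ →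
      |f (x + s₁) - f (x + s₂) - f' x * (s₁ - s₂)| ≤ M * ((|s₁| + |s₂|) * |s₁ - s₂|) := by
    intro s₁ s₂ hs1 hs2 hlt
    obtain ⟨ξ, hξmem, hξ⟩ := exists_hasDerivAt_eq_slope f f'
      (by linarith : x + s₂ < x + s₁)
      (fun y _ => (hf y).continuousAt.continuousWithinAt) (fun y _ => hf y)
    rw [Set.mem_Ioo] at hξmem
    have hba : (x + s₁) - (x + s₂) = s₁ - s₂ := by ring
    rw [hba] at hξ
    have heq : f (x + s₁) - f (x + s₂) = f' ξ * (s₁ - s₂) := by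
      rw [hξ, div_mul_cancel₀ _ (sub_ne_zero.2 hlt.ne')]
    have hrw : f (x + s₁) - f (x + s₂) - f' x * (s₁ - s₂) = (f' ξ - f' x) * (s₁ - s₂) := by
      rw [heq]; ring
    rw [hrw, abs_mul]
    have hlb := hξmem.1
    have hub := hξmem.2
    have hξx : |ξ - x| ≤ |s₁| + |s₂| := by
      rw [abs_le]
      constructor
      · have := neg_abs_le s₂
        have := abs_nonneg s₁
        linarith
      · have := le_abs_self s₁
        have := abs_nonneg s₂
        linarith
    have hξx1 : |ξ - x| ≤ 1 := by
      rw [abs_le]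
      constructor
      · have := neg_abs_le s₂
        linarith
      · have := le_abs_self s₁
        linarith
    have hξB : |ξ| ≤ B₁ + 1 := by
      calc |ξ| = |x + (ξ - x)| := by rw [show x + (ξ - x) = ξ from by ring]
        _ ≤ |x| + |ξ - x| := abs_add_le _ _
        _ ≤ B₁ + 1 := by linarith
    have hd := hM ξ x hξB (by linarith : |x| ≤ B₁ + 1)
    calc |f' ξ - f' x| * |s₁ - s₂| ≤ (M * |ξ - x|) * |s₁ - s₂| :=
          mul_le_mul_of_nonneg_right hd (abs_nonneg _)
      _ ≤ (M * (|s₁| + |s₂|)) * |s₁ - s₂| :=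
          mul_le_mul_of_nonneg_right (mul_le_mul_of_nonneg_left hξx hM0) (abs_nonneg _)
      _ = M * ((|s₁| + |s₂|) * |s₁ - s₂|) := by ring
  rcases lt_trichotomy t₂ t₁ with h | h | h
  · exact core t₁ t₂ h1 h2 h
  · rw [h]
    simp
  · have hc := core t₂ t₁ h2 h1 h
    have hflip : f (x + t₁) - f (x + t₂) - f' x * (t₁ - t₂) =
        -(f (x + t₂) - f (x + t₁) - f' x * (t₂ - t₁)) := by ring
    rw [hflip, abs_neg]
    refine hc.trans (le_of_eq ?_)
    rw [abs_sub_comm t₂ t₁]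
    ring

lemma root_slopes (m k : ℕ) (hm : 1 ≤ m) (hmk : m < k) (γ : ℝ) (hγ0 : 0 < γ)
    (a A : ℝ) (ha : 0 < a) (haA : a < A)
    (h1 : (1 : ℝ) - a ^ m + γ * a ^ k = 0) (h2 : (1 : ℝ) - A ^ m + γ * A ^ k = 0) :
    γ * k * a ^ (k - m) < m ∧ (m : ℝ) < γ * k * A ^ (k - m) := by
  have hA : 0 < A := ha.trans haA
  have hk0 : (0 : ℝ) < (k : ℝ) := by exact_mod_cast (by omega : 0 < k)
  have hcont : Continuous (fun u : ℝ => u ^ m - γ * u ^ k) :=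
    (continuous_pow m).sub (continuous_const.mul (continuous_pow k))
  have hd : ∀ u : ℝ, HasDerivAt (fun u : ℝ => u ^ m - γ * u ^ k)
      ((m : ℝ) * u ^ (m - 1) - γ * ((k : ℝ) * u ^ (k - 1))) u :=
    fun u => (hasDerivAt_pow m u).sub ((hasDerivAt_pow k u).const_mul γ)
  have hfa : a ^ m - γ * a ^ k = 1 := by linarith
  have hfA : A ^ m - γ * A ^ k = 1 := by linarith
  constructor
  · by_contra hcon
    push_neg at hcon
    have hanti : StrictAntiOn (fun u : ℝ => u ^ m - γ * u ^ k) (Set.Ici a) := by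
      apply strictAntiOn_of_deriv_neg (convex_Ici a) hcont.continuousOn
      intro u hu
      rw [interior_Ici] at hu
      have hau : a < u := hu
      have hu0 : 0 < u := ha.trans hau
      rw [(hd u).deriv]
      have e : u ^ (k - 1) = u ^ (m - 1) * u ^ (k - m) := by
        rw [← pow_add]; congr 1; omega
      have e2 : a ^ (k - m) < u ^ (k - m) := pow_lt_pow_left₀ hau ha.le (by omega)
      have hp1 : (0 : ℝ) < u ^ (m - 1) := pow_pos hu0 _
      rw [e]
      nlinarith [mul_lt_mul_of_pos_left e2 (mul_pos (mul_pos hγ0 hk0) hp1),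
        mul_le_mul_of_nonneg_right hcon hp1.le]
    have hAa := hanti (Set.self_mem_Ici) (Set.mem_Ici.2 haA.le) haA
    simp only at hAa
    linarith
  · by_contra hcon
    push_neg at hcon
    have hmono : StrictMonoOn (fun u : ℝ => u ^ m - γ * u ^ k) (Set.Icc a A) := by
      apply strictMonoOn_of_deriv_pos (convex_Icc a A) hcont.continuousOn
      intro u hu
      rw [interior_Icc] at hu
      have hau : a < u := hu.1
      have huA : u < A := hu.2
      have hu0 : 0 < u := ha.trans hau
      rw [(hd u).deriv]
      have e : u ^ (k - 1) = u ^ (m - 1) * u ^ (k - m) := by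
        rw [← pow_add]; congr 1; omega
      have e2 : u ^ (k - m) < A ^ (k - m) := pow_lt_pow_left₀ huA hu0.le (by omega)
      have hp1 : (0 : ℝ) < u ^ (m - 1) := pow_pos hu0 _
      rw [e]
      nlinarith [mul_lt_mul_of_pos_left e2 (mul_pos (mul_pos hγ0 hk0) hp1),
        mul_le_mul_of_nonneg_right hcon hp1.le]
    have haA' := hmono (Set.left_mem_Icc.2 haA.le) (Set.right_mem_Icc.2 haA.le) haA
    simp only at haA'
    linarith

end ILM


/-- The critical parameter `γ_{p,q} = ((p−1)/(q−1))·((q−p)/(q−1))^{(q−p)/(p−1)}`. -/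
noncomputable def gammaCrit (p q : ℕ) : ℝ :=
  (((p : ℝ) - 1) / ((q : ℝ) - 1)) *
    (((q : ℝ) - (p : ℝ)) / ((q : ℝ) - 1)) ^ (((q : ℝ) - (p : ℝ)) / ((p : ℝ) - 1))

/-- Extension of a vector `Fin N → ℝ` to `ℕ` by zero. -/
def extFin (N : ℕ) (ut : Fin N → ℝ) : ℕ → ℝ :=
  fun i => if h : i < N then ut ⟨i, h⟩ else 0

/-- The limiting sequence `u⁽⁰⁾ : ℤ → ℝ`, equal to `ũ_n` for `1 ≤ n ≤ N` and `0` otherwise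
(1-indexed convention). -/
def limitSeq (N : ℕ) (ut : Fin N → ℝ) : ℤ → ℝ :=
  fun n => if 1 ≤ n ∧ n ≤ (N : ℤ) then extFin N ut (n - 1).toNat else 0

set_option maxHeartbeats 4000000 in
/-- Existence of intrinsic localized modes near the anticontinuum limit: for the codes
with entries in `{a, −a, A, −A}` there is, for every small enough `ε > 0`, a real
ℓ²(ℤ) solution of the stationary DNLS equation within `C₀ ε` of the limiting sequence. -/
theorem exists_ILM_near_ACL (p q : ℕ) (hp : 2 ≤ p) (hpq : p < q)
    (γ : ℝ) (hγ0 : 0 < γ) (hγ : γ < gammaCrit p q)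
    (a A : ℝ) (ha : 0 < a) (haA : a < A)
    (hroota : 1 - a ^ (p - 1) + γ * a ^ (q - 1) = 0)
    (hrootA : 1 - A ^ (p - 1) + γ * A ^ (q - 1) = 0)
    (N : ℕ) (hN : 1 ≤ N) (ut : Fin N → ℝ)
    (hut : ∀ n, ut n = a ∨ ut n = -a ∨ ut n = A ∨ ut n = -A) :
    ∃ ε₀ > (0 : ℝ), ∃ C₀ > (0 : ℝ), ∀ ε : ℝ, 0 < ε → ε < ε₀ →
      ∃ u : ℤ → ℝ,
        (∀ n : ℤ, ε * (u (n + 1) - 2 * u n + u (n - 1)) - u n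
          + |u n| ^ (p - 1) * u n - γ * |u n| ^ (q - 1) * u n = 0) ∧
        Summable (fun n : ℤ => (u n) ^ 2) ∧
        Summable (fun n : ℤ => (u n - limitSeq N ut n) ^ 2) ∧
        Real.sqrt (∑' n : ℤ, (u n - limitSeq N ut n) ^ 2) ≤ C₀ * ε := by
  classical
  obtain ⟨m, rfl⟩ : ∃ m, p = m + 1 := ⟨p - 1, by omega⟩
  obtain ⟨k, rfl⟩ : ∃ k, q = k + 1 := ⟨q - 1, by omega⟩
  simp only [Nat.add_sub_cancel] at hroota hrootA ⊢
  have hm1 : 1 ≤ m := by omega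
  have hk1 : 1 ≤ k := by omega
  have hmk : m < k := by omega
  have hA : 0 < A := ha.trans haA
  obtain ⟨hsa, hsA⟩ := ILM.root_slopes m k hm1 hmk γ hγ0 a A ha haA hroota hrootA
  set u0 : ℤ → ℝ := limitSeq N ut with hu0def
  have hu0cases : ∀ n : ℤ, u0 n = 0 ∨ u0 n = a ∨ u0 n = -a ∨ u0 n = A ∨ u0 n = -A := by
    intro n
    rw [hu0def]
    unfold limitSeq
    split_ifs with h
    · unfold extFin
      split
      · rcases hut _ with h' | h' | h' | h' <;> rw [h'] <;> tauto
      · tauto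
    · tauto
  have hu0abs : ∀ n, |u0 n| ≤ A := by
    intro n
    have h2 : -A ≤ u0 n ∧ u0 n ≤ A := by
      rcases hu0cases n with h | h | h | h | h <;> rw [h] <;> constructor <;>
        linarith only [ha, haA, hA]
    exact abs_le.2 h2
  have hφa : ILM.phiF m k γ a = 0 := by
    unfold ILM.phiF
    rw [abs_of_pos ha]
    linear_combination (-a) * hroota
  have hφA : ILM.phiF m k γ A = 0 := by
    unfold ILM.phiF
    rw [abs_of_pos hA]
    linear_combination (-A) * hrootA
  have hφodd : ∀ x : ℝ, ILM.phiF m k γ (-x) = -ILM.phiF m k γ x := by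
    intro x; unfold ILM.phiF; rw [abs_neg]; ring
  have hφzero : ILM.phiF m k γ 0 = 0 := by unfold ILM.phiF; simp
  have hφ0 : ∀ n, ILM.phiF m k γ (u0 n) = 0 := by
    intro n
    rcases hu0cases n with h | h | h | h | h <;> rw [h]
    · exact hφzero
    · exact hφa
    · rw [hφodd, hφa, neg_zero]
    · exact hφA
    · rw [hφodd, hφA, neg_zero]
  have hφdeven : ∀ x : ℝ, ILM.phidF m k γ (-x) = ILM.phidF m k γ x := by
    intro x; unfold ILM.phidF; rw [abs_neg]
  have hφdaval : ILM.phidF m k γ a = a ^ m * ((m : ℝ) - γ * k * a ^ (k - m)) := by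
    unfold ILM.phidF
    rw [abs_of_pos ha]
    have e1 : a ^ k = a ^ m * a ^ (k - m) := by rw [← pow_add]; congr 1; omega
    linear_combination (-1 : ℝ) * hroota - γ * (k : ℝ) * e1
  have hφdAval : ILM.phidF m k γ A = A ^ m * ((m : ℝ) - γ * k * A ^ (k - m)) := by
    unfold ILM.phidF
    rw [abs_of_pos hA]
    have e1 : A ^ k = A ^ m * A ^ (k - m) := by rw [← pow_add]; congr 1; omega
    linear_combination (-1 : ℝ) * hrootA - γ * (k : ℝ) * e1
  have hφda_pos : 0 < ILM.phidF m k γ a := by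
    rw [hφdaval]; apply mul_pos (pow_pos ha m); linarith only [hsa]
  have hφdA_neg : ILM.phidF m k γ A < 0 := by
    rw [hφdAval]
    apply mul_neg_of_pos_of_neg (pow_pos hA m)
    linarith only [hsA]
  have hφd0 : ILM.phidF m k γ 0 = -1 := by
    unfold ILM.phidF
    simp [zero_pow (by omega : m ≠ 0), zero_pow (by omega : k ≠ 0)]
  obtain ⟨c, hcdef⟩ : ∃ c : ℝ, c = min 1 (min (ILM.phidF m k γ a) (-ILM.phidF m k γ A)) :=
    ⟨_, rfl⟩
  have hc0 : 0 < c := hcdef ▸ lt_min one_pos (lt_min hφda_pos (by linarith only [hφdA_neg]))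
  have hc1 : c ≤ 1 := hcdef ▸ min_le_left _ _
  have hca : c ≤ ILM.phidF m k γ a := hcdef ▸ (min_le_right _ _).trans (min_le_left _ _)
  have hcA : c ≤ -ILM.phidF m k γ A := hcdef ▸ (min_le_right _ _).trans (min_le_right _ _)
  have hcinv : (0 : ℝ) ≤ c⁻¹ := inv_nonneg.2 hc0.le
  have hcabs : ∀ n, c ≤ |ILM.phidF m k γ (u0 n)| := by
    intro n
    rcases hu0cases n with h | h | h | h | h <;> rw [h]
    · rw [hφd0, abs_neg, abs_one]; exact hc1
    · rw [abs_of_pos hφda_pos]; exact hca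
    · rw [hφdeven, abs_of_pos hφda_pos]; exact hca
    · rw [abs_of_neg hφdA_neg]; exact hcA
    · rw [hφdeven, abs_of_neg hφdA_neg]; exact hcA
  have hφdne : ∀ n, ILM.phidF m k γ (u0 n) ≠ 0 := by
    intro n h
    have h2 := hcabs n
    rw [h, abs_zero] at h2
    linarith only [h2, hc0]
  obtain ⟨M, hMdef⟩ : ∃ M : ℝ, M = ((m : ℝ) + 1) * ((m : ℝ) * (A + 1) ^ (m - 1)) +
      γ * (((k : ℝ) + 1) * ((k : ℝ) * (A + 1) ^ (k - 1))) := ⟨_, rfl⟩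
  have hA1 : (0 : ℝ) < A + 1 := by linarith
  have hM0 : 0 ≤ M := by
    rw [hMdef]
    have p1 : (0 : ℝ) ≤ (A + 1) ^ (m - 1) := (pow_pos hA1 _).le
    have p2 : (0 : ℝ) ≤ (A + 1) ^ (k - 1) := (pow_pos hA1 _).le
    have p3 : (0 : ℝ) ≤ (m : ℝ) := Nat.cast_nonneg m
    have p4 : (0 : ℝ) ≤ (k : ℝ) := Nat.cast_nonneg k
    have p5 : (0 : ℝ) ≤ γ := hγ0.le
    positivity
  have hMlip : ∀ x y : ℝ, |x| ≤ A + 1 → |y| ≤ A + 1 →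
      |ILM.phidF m k γ x - ILM.phidF m k γ y| ≤ M * |x - y| := by
    intro x y hx hy
    rw [hMdef]
    exact ILM.phidF_lip m k γ (A + 1) hγ0.le x y hx hy
  have hu0zero : ∀ n : ℤ, (¬ (1 ≤ n ∧ n ≤ (N : ℤ))) → u0 n = 0 := by
    intro n hn
    rw [hu0def]
    unfold limitSeq
    rw [if_neg hn]
  set DLfun : ℤ → ℝ := fun n => u0 (n + 1) - 2 * u0 n + u0 (n - 1) with hDLdef
  have hDLzero : ∀ n ∉ Finset.Icc (0 : ℤ) ((N : ℤ) + 1), DLfun n = 0 := by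
    intro n hn
    rw [Finset.mem_Icc] at hn
    push_neg at hn
    rw [hDLdef]
    have z1 : u0 (n + 1) = 0 := hu0zero _ (by omega)
    have z2 : u0 n = 0 := hu0zero _ (by omega)
    have z3 : u0 (n - 1) = 0 := hu0zero _ (by omega)
    simp only []
    rw [z1, z2, z3]
    ring
  have hDLsum : Summable (fun n : ℤ => (DLfun n) ^ 2) := by
    apply summable_of_ne_finset_zero (s := Finset.Icc (0 : ℤ) ((N : ℤ) + 1))
    intro n hn
    rw [hDLzero n hn]
    norm_num
  set DL : lp (fun _ : ℤ => ℝ) 2 := ILM.mkE DLfun hDLsum with hDLbdef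
  obtain ⟨D, hDdef⟩ : ∃ D : ℝ, D = ‖DL‖ := ⟨_, rfl⟩
  have hD0 : 0 ≤ D := hDdef ▸ norm_nonneg _
  have hu0sum : Summable (fun n : ℤ => (u0 n) ^ 2) := by
    apply summable_of_ne_finset_zero (s := Finset.Icc (1 : ℤ) (N : ℤ))
    intro n hn
    rw [Finset.mem_Icc] at hn
    rw [hu0zero n (by omega)]
    norm_num
  obtain ⟨C₀, hC₀def⟩ : ∃ C : ℝ, C = 2 * (D + 1) / c := ⟨_, rfl⟩
  have hC₀pos : 0 < C₀ := hC₀def ▸ div_pos (by linarith only [hD0]) hc0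
  obtain ⟨ε₀, hε₀def⟩ : ∃ e : ℝ, e = c / (2 * (4 + 2 * M * C₀ + C₀ + 1)) := ⟨_, rfl⟩
  have hden : (0 : ℝ) < 4 + 2 * M * C₀ + C₀ + 1 := by
    linarith only [mul_nonneg hM0 hC₀pos.le, hC₀pos]
  have hε₀pos : 0 < ε₀ := hε₀def ▸ div_pos hc0 (by linarith only [hden])
  refine ⟨ε₀, hε₀pos, C₀, hC₀pos, ?_⟩
  intro ε hε hεlt
  obtain ⟨r, hrdef⟩ : ∃ r : ℝ, r = C₀ * ε := ⟨_, rfl⟩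
  have hr0 : 0 < r := hrdef ▸ mul_pos hC₀pos hε
  have hkey0 : (4 + 2 * M * C₀ + C₀ + 1) * ε ≤ c / 2 := by
    have h1 : (4 + 2 * M * C₀ + C₀ + 1) * ε ≤ (4 + 2 * M * C₀ + C₀ + 1) * ε₀ :=
      mul_le_mul_of_nonneg_left hεlt.le hden.le
    have h2 : (4 + 2 * M * C₀ + C₀ + 1) * ε₀ = c / 2 := by
      rw [hε₀def]
      field_simp
    exact h1.trans_eq h2
  have hr1 : r ≤ 1 := by
    have h1 : C₀ * ε ≤ (4 + 2 * M * C₀ + C₀ + 1) * ε := by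
      apply mul_le_mul_of_nonneg_right _ hε.le
      linarith only [mul_nonneg hM0 hC₀pos.le]
    rw [hrdef]
    linarith only [h1, hkey0, hc1]
  have hsmall : 4 * ε + 2 * M * r ≤ c / 2 := by
    have h1 : 4 * ε + 2 * M * r = (4 + 2 * M * C₀) * ε := by rw [hrdef]; ring
    have h2 : (4 + 2 * M * C₀) * ε ≤ (4 + 2 * M * C₀ + C₀ + 1) * ε := by
      apply mul_le_mul_of_nonneg_right _ hε.le
      linarith only [hC₀pos]
    linarith only [h1, h2, hkey0]
  have hεD : ε * (D + 1) ≤ (c / 2) * r := by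
    apply le_of_eq
    rw [hrdef, hC₀def]
    field_simp
  have hcoef2 : (0 : ℝ) ≤ c⁻¹ * (2 * ε + 2 * M * r) :=
    mul_nonneg hcinv (by linarith only [mul_nonneg hM0 hr0.le, hε.le])
  set Tfun : (ℤ → ℝ) → ℤ → ℝ := fun f n =>
    f n - (ε * ((u0 (n + 1) + f (n + 1)) - 2 * (u0 n + f n) + (u0 (n - 1) + f (n - 1)))
      + ILM.phiF m k γ (u0 n + f n)) / ILM.phidF m k γ (u0 n) with hTdef
  have habs3 : ∀ x y z : ℝ, |x - 2 * y + z| ≤ |x| + 2 * |y| + |z| := by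
    intro x y z
    have h1 := abs_add_le (x - 2 * y) z
    have h2 := abs_sub x (2 * y)
    rw [abs_mul] at h2
    have h3 : |(2 : ℝ)| = 2 := by norm_num
    rw [h3] at h2
    linarith only [h1, h2]
  have hptdiff : ∀ f g : lp (fun _ : ℤ => ℝ) 2, ‖f‖ ≤ r → ‖g‖ ≤ r → ∀ n : ℤ,
      |Tfun (⇑f) n - Tfun (⇑g) n| ≤
        (c⁻¹ * ε) * |f (n + 1) - g (n + 1)| + (c⁻¹ * (2 * ε + 2 * M * r)) * |f n - g n|
          + (c⁻¹ * ε) * |f (n - 1) - g (n - 1)| := by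
    intro f g hf hg n
    have hfr : ∀ j, |f j| ≤ r := fun j => (ILM.abs_apply_le_norm f j).trans hf
    have hgr : ∀ j, |g j| ≤ r := fun j => (ILM.abs_apply_le_norm g j).trans hg
    have hmvt := ILM.mvt_bound (ILM.phiF m k γ) (ILM.phidF m k γ)
      (ILM.phiF_hasDeriv m k hm1 hk1 γ) A M hM0 hMlip (u0 n) (f n) (g n)
      (hu0abs n) ((hfr n).trans hr1) ((hgr n).trans hr1)
    set X : ℝ := ε * ((f (n + 1) - g (n + 1)) - 2 * (f n - g n) + (f (n - 1) - g (n - 1)))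
      + (ILM.phiF m k γ (u0 n + f n) - ILM.phiF m k γ (u0 n + g n)
          - ILM.phidF m k γ (u0 n) * (f n - g n)) with hXdef
    have hid : Tfun (⇑f) n - Tfun (⇑g) n = -X / ILM.phidF m k γ (u0 n) := by
      rw [hXdef]
      simp only [hTdef]
      field_simp [hφdne n]
      ring
    rw [hid, abs_div, abs_neg]
    have hXbound : |X| ≤ ε * |f (n + 1) - g (n + 1)| + (2 * ε + 2 * M * r) * |f n - g n|
        + ε * |f (n - 1) - g (n - 1)| := by
      have t1 := abs_add_le
        (ε * ((f (n + 1) - g (n + 1)) - 2 * (f n - g n) + (f (n - 1) - g (n - 1))))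
        (ILM.phiF m k γ (u0 n + f n) - ILM.phiF m k γ (u0 n + g n)
          - ILM.phidF m k γ (u0 n) * (f n - g n))
      have t2 : |ε * ((f (n + 1) - g (n + 1)) - 2 * (f n - g n) + (f (n - 1) - g (n - 1)))|
          ≤ ε * (|f (n + 1) - g (n + 1)| + 2 * |f n - g n| + |f (n - 1) - g (n - 1)|) := by
        rw [abs_mul, abs_of_pos hε]
        exact mul_le_mul_of_nonneg_left (habs3 _ _ _) hε.le
      have t3 : |ILM.phiF m k γ (u0 n + f n) - ILM.phiF m k γ (u0 n + g n)
          - ILM.phidF m k γ (u0 n) * (f n - g n)| ≤ 2 * M * r * |f n - g n| := by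
        refine hmvt.trans ?_
        have hsum : |f n| + |g n| ≤ 2 * r := by linarith only [hfr n, hgr n]
        have h5 := mul_le_mul_of_nonneg_right hsum (abs_nonneg (f n - g n))
        linarith only [mul_le_mul_of_nonneg_left h5 hM0]
      rw [hXdef]
      linarith only [t1, t2, t3]
    calc |X| / |ILM.phidF m k γ (u0 n)| ≤ |X| / c := by
          gcongr
          exact hcabs n
      _ ≤ (ε * |f (n + 1) - g (n + 1)| + (2 * ε + 2 * M * r) * |f n - g n|
            + ε * |f (n - 1) - g (n - 1)|) / c := by
          gcongr
      _ = _ := by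
          rw [div_eq_mul_inv]
          ring
  have hptself : ∀ f : lp (fun _ : ℤ => ℝ) 2, ‖f‖ ≤ r → ∀ n : ℤ,
      |Tfun (⇑f) n| ≤ (c⁻¹ * ε) * |DLfun n| + ((c⁻¹ * ε) * |f (n + 1)|
        + ((c⁻¹ * (2 * ε + 2 * M * r)) * |f n| + (c⁻¹ * ε) * |f (n - 1)|)) := by
    intro f hf n
    have h0r : ‖(0 : lp (fun _ : ℤ => ℝ) 2)‖ ≤ r := by rw [norm_zero]; exact hr0.le
    have hdiff := hptdiff f 0 hf h0r n
    simp only [lp.coeFn_zero, Pi.zero_apply, sub_zero] at hdiff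
    have hT0 : Tfun (⇑(0 : lp (fun _ : ℤ => ℝ) 2)) n
        = -(ε * DLfun n) / ILM.phidF m k γ (u0 n) := by
      simp only [hTdef, lp.coeFn_zero, Pi.zero_apply, add_zero, hDLdef]
      rw [hφ0 n]
      ring
    have hT0abs : |Tfun (⇑(0 : lp (fun _ : ℤ => ℝ) 2)) n| ≤ (c⁻¹ * ε) * |DLfun n| := by
      rw [hT0, abs_div, abs_neg, abs_mul, abs_of_pos hε]
      calc ε * |DLfun n| / |ILM.phidF m k γ (u0 n)| ≤ ε * |DLfun n| / c := by
            gcongr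
            exact hcabs n
        _ = (c⁻¹ * ε) * |DLfun n| := by rw [div_eq_mul_inv]; ring
    simp only [lp.coeFn_zero] at hT0abs
    calc |Tfun (⇑f) n|
        = |(Tfun (⇑f) n - Tfun (0 : ℤ → ℝ) n)
            + Tfun (0 : ℤ → ℝ) n| := by rw [sub_add_cancel]
      _ ≤ |Tfun (⇑f) n - Tfun (0 : ℤ → ℝ) n|
            + |Tfun (0 : ℤ → ℝ) n| := abs_add_le _ _
      _ ≤ _ := by linarith only [hdiff, hT0abs]
  set Gof : lp (fun _ : ℤ => ℝ) 2 → lp (fun _ : ℤ => ℝ) 2 := fun f =>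
    (c⁻¹ * ε) • ILM.absE DL + ((c⁻¹ * ε) • ILM.shiftE 1 (ILM.absE f)
      + ((c⁻¹ * (2 * ε + 2 * M * r)) • ILM.absE f
        + (c⁻¹ * ε) • ILM.shiftE (-1) (ILM.absE f))) with hGofdef
  have hGapp : ∀ (f : lp (fun _ : ℤ => ℝ) 2) (n : ℤ),
      Gof f n = (c⁻¹ * ε) * |DLfun n| + ((c⁻¹ * ε) * |f (n + 1)|
        + ((c⁻¹ * (2 * ε + 2 * M * r)) * |f n| + (c⁻¹ * ε) * |f (n - 1)|)) := by
    intro f n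
    simp only [hGofdef, lp.coeFn_add, Pi.add_apply, lp.coeFn_smul, Pi.smul_apply,
      smul_eq_mul, ILM.shiftE_apply, ILM.absE_apply, hDLbdef, ILM.mkE_apply]
    rw [show n + (-1 : ℤ) = n - 1 from by ring]
  have hGnonneg : ∀ f n, 0 ≤ Gof f n := by
    intro f n
    rw [hGapp]
    have e1 : (0 : ℝ) ≤ (c⁻¹ * ε) * |DLfun n| :=
      mul_nonneg (mul_nonneg hcinv hε.le) (abs_nonneg _)
    have e2 : (0 : ℝ) ≤ (c⁻¹ * ε) * |f (n + 1)| :=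
      mul_nonneg (mul_nonneg hcinv hε.le) (abs_nonneg _)
    have e3 : (0 : ℝ) ≤ (c⁻¹ * (2 * ε + 2 * M * r)) * |f n| :=
      mul_nonneg hcoef2 (abs_nonneg _)
    have e4 : (0 : ℝ) ≤ (c⁻¹ * ε) * |f (n - 1)| :=
      mul_nonneg (mul_nonneg hcinv hε.le) (abs_nonneg _)
    linarith only [e1, e2, e3, e4]
  have hptG : ∀ (f : lp (fun _ : ℤ => ℝ) 2) (hf : ‖f‖ ≤ r) (n : ℤ),
      |Tfun (⇑f) n| ≤ Gof f n := by
    intro f hf n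
    rw [hGapp]
    exact hptself f hf n
  have hGnorm : ∀ f : lp (fun _ : ℤ => ℝ) 2,
      ‖Gof f‖ ≤ (c⁻¹ * ε) * D + ((c⁻¹ * ε) * ‖f‖
        + ((c⁻¹ * (2 * ε + 2 * M * r)) * ‖f‖ + (c⁻¹ * ε) * ‖f‖)) := by
    intro f
    have habsc : |c⁻¹ * ε| = c⁻¹ * ε := abs_of_nonneg (mul_nonneg hcinv hε.le)
    have habsc2 : |c⁻¹ * (2 * ε + 2 * M * r)| = c⁻¹ * (2 * ε + 2 * M * r) :=
      abs_of_nonneg hcoef2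
    have n1 : ‖(c⁻¹ * ε) • ILM.absE DL‖ = (c⁻¹ * ε) * D := by
      rw [norm_smul, Real.norm_eq_abs, habsc, ILM.norm_absE, ← hDdef]
    have n2 : ‖(c⁻¹ * ε) • ILM.shiftE 1 (ILM.absE f)‖ = (c⁻¹ * ε) * ‖f‖ := by
      rw [norm_smul, Real.norm_eq_abs, habsc, ILM.norm_shiftE, ILM.norm_absE]
    have n3 : ‖(c⁻¹ * (2 * ε + 2 * M * r)) • ILM.absE f‖
        = (c⁻¹ * (2 * ε + 2 * M * r)) * ‖f‖ := by
      rw [norm_smul, Real.norm_eq_abs, habsc2, ILM.norm_absE]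
    have n4 : ‖(c⁻¹ * ε) • ILM.shiftE (-1) (ILM.absE f)‖ = (c⁻¹ * ε) * ‖f‖ := by
      rw [norm_smul, Real.norm_eq_abs, habsc, ILM.norm_shiftE, ILM.norm_absE]
    rw [hGofdef]
    refine (norm_add_le _ _).trans ?_
    rw [n1]
    have step2 : ‖(c⁻¹ * ε) • ILM.shiftE 1 (ILM.absE f)
        + ((c⁻¹ * (2 * ε + 2 * M * r)) • ILM.absE f
          + (c⁻¹ * ε) • ILM.shiftE (-1) (ILM.absE f))‖
        ≤ (c⁻¹ * ε) * ‖f‖ + ((c⁻¹ * (2 * ε + 2 * M * r)) * ‖f‖ + (c⁻¹ * ε) * ‖f‖) := by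
      refine (norm_add_le _ _).trans ?_
      rw [n2]
      have step3 := (norm_add_le ((c⁻¹ * (2 * ε + 2 * M * r)) • ILM.absE f)
        ((c⁻¹ * ε) • ILM.shiftE (-1) (ILM.absE f)))
      rw [n3, n4] at step3
      linarith only [step3]
    linarith only [step2]
  have hmemT : ∀ (f : lp (fun _ : ℤ => ℝ) 2), ‖f‖ ≤ r → Memℓp (Tfun ⇑f) 2 := by
    intro f hf
    rw [ILM.memE_iff]
    refine Summable.of_nonneg_of_le (fun n => sq_nonneg _) (fun n => ?_)
      (ILM.memE_iff.1 (lp.memℓp (Gof f)))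
    have h2 := hptG f hf n
    calc (Tfun (⇑f) n) ^ 2 = |Tfun (⇑f) n| ^ 2 := (sq_abs _).symm
      _ ≤ (Gof f n) ^ 2 := pow_le_pow_left₀ (abs_nonneg _) h2 2
  have hTnorm : ∀ (f : lp (fun _ : ℤ => ℝ) 2) (hf : ‖f‖ ≤ r),
      ‖(⟨Tfun ⇑f, hmemT f hf⟩ : lp (fun _ : ℤ => ℝ) 2)‖ ≤ r := by
    intro f hf
    have hle : ‖(⟨Tfun ⇑f, hmemT f hf⟩ : lp (fun _ : ℤ => ℝ) 2)‖ ≤ ‖Gof f‖ := by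
      apply ILM.norm_le_of_abs_le
      intro n
      rw [abs_of_nonneg (hGnonneg f n)]
      exact hptG f hf n
    refine hle.trans ((hGnorm f).trans ?_)
    have b1 : (c⁻¹ * ε) * ‖f‖ ≤ (c⁻¹ * ε) * r :=
      mul_le_mul_of_nonneg_left hf (mul_nonneg hcinv hε.le)
    have b2 : (c⁻¹ * (2 * ε + 2 * M * r)) * ‖f‖ ≤ (c⁻¹ * (2 * ε + 2 * M * r)) * r :=
      mul_le_mul_of_nonneg_left hf hcoef2
    have hXle : ε * D + (4 * ε + 2 * M * r) * r ≤ c * r := by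
      have e1 : ε * D ≤ (c / 2) * r := by linarith only [hεD, hε.le]
      have e2 : (4 * ε + 2 * M * r) * r ≤ (c / 2) * r :=
        mul_le_mul_of_nonneg_right hsmall hr0.le
      linarith only [e1, e2]
    have hfinal : (c⁻¹ * ε) * D + ((c⁻¹ * ε) * r + ((c⁻¹ * (2 * ε + 2 * M * r)) * r
        + (c⁻¹ * ε) * r)) = c⁻¹ * (ε * D + (4 * ε + 2 * M * r) * r) := by ring
    have h6 : c⁻¹ * (ε * D + (4 * ε + 2 * M * r) * r) ≤ c⁻¹ * (c * r) :=
      mul_le_mul_of_nonneg_left hXle hcinv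
    have hcr : c⁻¹ * (c * r) = r := by field_simp
    linarith only [b1, b2, hfinal, h6, hcr]
  have hTdist : ∀ (f g : lp (fun _ : ℤ => ℝ) 2) (hf : ‖f‖ ≤ r) (hg : ‖g‖ ≤ r),
      ‖(⟨Tfun ⇑f, hmemT f hf⟩ : lp (fun _ : ℤ => ℝ) 2) - ⟨Tfun ⇑g, hmemT g hg⟩‖
        ≤ 2⁻¹ * ‖f - g‖ := by
    intro f g hf hg
    set d : lp (fun _ : ℤ => ℝ) 2 := f - g with hddef
    set G2 : lp (fun _ : ℤ => ℝ) 2 := (c⁻¹ * ε) • ILM.shiftE 1 (ILM.absE d)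
      + ((c⁻¹ * (2 * ε + 2 * M * r)) • ILM.absE d
        + (c⁻¹ * ε) • ILM.shiftE (-1) (ILM.absE d)) with hG2def
    have hdapp : ∀ j : ℤ, d j = f j - g j := by
      intro j
      rw [hddef, lp.coeFn_sub]
      rfl
    have hG2app : ∀ n : ℤ, G2 n = (c⁻¹ * ε) * |f (n + 1) - g (n + 1)|
        + ((c⁻¹ * (2 * ε + 2 * M * r)) * |f n - g n|
          + (c⁻¹ * ε) * |f (n - 1) - g (n - 1)|) := by
      intro n
      simp only [hG2def, lp.coeFn_add, Pi.add_apply, lp.coeFn_smul, Pi.smul_apply,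
        smul_eq_mul, ILM.shiftE_apply, ILM.absE_apply]
      rw [show n + (-1 : ℤ) = n - 1 from by ring, hdapp, hdapp, hdapp]
    have hG2nonneg : ∀ n, 0 ≤ G2 n := by
      intro n
      rw [hG2app]
      have e2 : (0 : ℝ) ≤ (c⁻¹ * ε) * |f (n + 1) - g (n + 1)| :=
        mul_nonneg (mul_nonneg hcinv hε.le) (abs_nonneg _)
      have e3 : (0 : ℝ) ≤ (c⁻¹ * (2 * ε + 2 * M * r)) * |f n - g n| :=
        mul_nonneg hcoef2 (abs_nonneg _)
      have e4 : (0 : ℝ) ≤ (c⁻¹ * ε) * |f (n - 1) - g (n - 1)| :=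
        mul_nonneg (mul_nonneg hcinv hε.le) (abs_nonneg _)
      linarith only [e2, e3, e4]
    have hle : ‖(⟨Tfun ⇑f, hmemT f hf⟩ : lp (fun _ : ℤ => ℝ) 2) - ⟨Tfun ⇑g, hmemT g hg⟩‖
        ≤ ‖G2‖ := by
      apply ILM.norm_le_of_abs_le
      intro n
      rw [abs_of_nonneg (hG2nonneg n)]
      have hsub : ((⟨Tfun ⇑f, hmemT f hf⟩ : lp (fun _ : ℤ => ℝ) 2)
          - ⟨Tfun ⇑g, hmemT g hg⟩) n = Tfun (⇑f) n - Tfun (⇑g) n := by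
        rw [lp.coeFn_sub]
        rfl
      rw [hsub, hG2app]
      have hc2 := hptdiff f g hf hg n
      linarith only [hc2]
    have habsc : |c⁻¹ * ε| = c⁻¹ * ε := abs_of_nonneg (mul_nonneg hcinv hε.le)
    have habsc2 : |c⁻¹ * (2 * ε + 2 * M * r)| = c⁻¹ * (2 * ε + 2 * M * r) :=
      abs_of_nonneg hcoef2
    have n2 : ‖(c⁻¹ * ε) • ILM.shiftE 1 (ILM.absE d)‖ = (c⁻¹ * ε) * ‖d‖ := by
      rw [norm_smul, Real.norm_eq_abs, habsc, ILM.norm_shiftE, ILM.norm_absE]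
    have n3 : ‖(c⁻¹ * (2 * ε + 2 * M * r)) • ILM.absE d‖
        = (c⁻¹ * (2 * ε + 2 * M * r)) * ‖d‖ := by
      rw [norm_smul, Real.norm_eq_abs, habsc2, ILM.norm_absE]
    have n4 : ‖(c⁻¹ * ε) • ILM.shiftE (-1) (ILM.absE d)‖ = (c⁻¹ * ε) * ‖d‖ := by
      rw [norm_smul, Real.norm_eq_abs, habsc, ILM.norm_shiftE, ILM.norm_absE]
    have hG2norm : ‖G2‖ ≤ (c⁻¹ * (4 * ε + 2 * M * r)) * ‖d‖ := by
      rw [hG2def]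
      refine (norm_add_le _ _).trans ?_
      rw [n2]
      have step3 := norm_add_le ((c⁻¹ * (2 * ε + 2 * M * r)) • ILM.absE d)
        ((c⁻¹ * ε) • ILM.shiftE (-1) (ILM.absE d))
      rw [n3, n4] at step3
      have : (c⁻¹ * ε) * ‖d‖ + ((c⁻¹ * (2 * ε + 2 * M * r)) * ‖d‖ + (c⁻¹ * ε) * ‖d‖)
          = (c⁻¹ * (4 * ε + 2 * M * r)) * ‖d‖ := by ring
      linarith only [step3, this]
    have hhalf : c⁻¹ * (4 * ε + 2 * M * r) ≤ 2⁻¹ := by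
      have h7 := mul_le_mul_of_nonneg_left hsmall hcinv
      have h8 : c⁻¹ * (c / 2) = 2⁻¹ := by field_simp
      linarith only [h7, h8]
    have h9 : (c⁻¹ * (4 * ε + 2 * M * r)) * ‖d‖ ≤ 2⁻¹ * ‖d‖ :=
      mul_le_mul_of_nonneg_right hhalf (norm_nonneg d)
    calc ‖(⟨Tfun ⇑f, hmemT f hf⟩ : lp (fun _ : ℤ => ℝ) 2) - ⟨Tfun ⇑g, hmemT g hg⟩‖
        ≤ ‖G2‖ := hle
      _ ≤ (c⁻¹ * (4 * ε + 2 * M * r)) * ‖d‖ := hG2norm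
      _ ≤ 2⁻¹ * ‖d‖ := h9
      _ = 2⁻¹ * ‖f - g‖ := by rw [hddef]
  set sball : Set (lp (fun _ : ℤ => ℝ) 2) := Metric.closedBall 0 r with hsdef
  have hmem_iff : ∀ x : lp (fun _ : ℤ => ℝ) 2, x ∈ sball ↔ ‖x‖ ≤ r := by
    intro x
    rw [hsdef, Metric.mem_closedBall, dist_zero_right]
  haveI hcs : CompleteSpace sball := by
    rw [hsdef]
    exact Metric.isClosed_closedBall.completeSpace_coe
  haveI hns : Nonempty sball :=
    ⟨⟨0, (hmem_iff 0).2 (by rw [norm_zero]; exact hr0.le)⟩⟩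
  set TS : sball → sball := fun x =>
    ⟨⟨Tfun ⇑(x : lp (fun _ : ℤ => ℝ) 2), hmemT _ ((hmem_iff _).1 x.2)⟩,
      (hmem_iff _).2 (hTnorm _ ((hmem_iff _).1 x.2))⟩ with hTSdef
  have hcontr : ContractingWith (2⁻¹ : ℝ≥0) TS := by
    constructor
    · rw [← NNReal.coe_lt_coe]
      norm_num
    · apply LipschitzWith.of_dist_le_mul
      intro x y
      have hco : (((2 : ℝ≥0)⁻¹ : ℝ≥0) : ℝ) = 2⁻¹ := by norm_num
      rw [Subtype.dist_eq, Subtype.dist_eq, dist_eq_norm, dist_eq_norm]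
      have h10 := hTdist (x : lp (fun _ : ℤ => ℝ) 2) (y : lp (fun _ : ℤ => ℝ) 2)
        ((hmem_iff _).1 x.2) ((hmem_iff _).1 y.2)
      rw [hTSdef]
      rw [hco]
      exact h10
  set vfix : sball := ContractingWith.fixedPoint TS hcontr with hvfixdef
  have hfixed : TS vfix = vfix := hcontr.fixedPoint_isFixedPt
  obtain ⟨v, hvE⟩ : ∃ v : lp (fun _ : ℤ => ℝ) 2, v = (vfix : lp (fun _ : ℤ => ℝ) 2) :=
    ⟨_, rfl⟩
  have hvr : ‖v‖ ≤ r := hvE ▸ (hmem_iff _).1 vfix.2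
  have hfixcoord : ∀ n : ℤ, Tfun (⇑v) n = v n := by
    intro n
    rw [hvE]
    conv_rhs => rw [← hfixed]
  refine ⟨fun n => u0 n + v n, ?_, ?_, ?_, ?_⟩
  · intro n
    have hfx := hfixcoord n
    simp only [hTdef] at hfx
    have hdiv : (ε * ((u0 (n + 1) + v (n + 1)) - 2 * (u0 n + v n) + (u0 (n - 1) + v (n - 1)))
        + ILM.phiF m k γ (u0 n + v n)) / ILM.phidF m k γ (u0 n) = 0 := by
      linarith only [hfx]
    have hnum : ε * ((u0 (n + 1) + v (n + 1)) - 2 * (u0 n + v n) + (u0 (n - 1) + v (n - 1)))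
        + ILM.phiF m k γ (u0 n + v n) = 0 := by
      rcases div_eq_zero_iff.1 hdiv with h | h
      · exact h
      · exact absurd h (hφdne n)
    have hφexp : ILM.phiF m k γ (u0 n + v n) = -(u0 n + v n)
        + |u0 n + v n| ^ m * (u0 n + v n) - γ * (|u0 n + v n| ^ k * (u0 n + v n)) := rfl
    rw [hφexp] at hnum
    linear_combination hnum
  · have hmem2 := Memℓp.add (ILM.memE_iff.2 hu0sum) (lp.memℓp v)
    exact ILM.memE_iff.1 hmem2
  · simpa using ILM.memE_iff.1 (lp.memℓp v)
  · have h11 : Real.sqrt (∑' n : ℤ, ((fun n : ℤ => u0 n + v n) n - u0 n) ^ 2) = ‖v‖ := by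
      rw [ILM.norm_eq]
      congr 1
      exact tsum_congr fun n => by
        show ((u0 n + v n) - u0 n) ^ 2 = (v n) ^ 2
        ring
    rw [h11, ← hrdef]
    exact hvr
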